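/- For every f ∈ (0,1), the function GMI_f is a valid cut generating function for f (with k = 1): GMI_f is nonnegative, GMI_f(0) = 0, GMI_f(f) = 1, GMI_f is subadditive (GMI_f(r + r') ≤ GMI_f(r) + GMI_f(r') for all r, r' ∈ ℝ), and GMI_f(r + w) = GMI_f(r) for all r ∈ ℝ and w ∈ ℤ. -/

import Mathlib

/-- The Gomory mixed-integer function: `GMI f r = [r]/f` if `[r] ≤ f`,
and `(1 - [r])/(1 - f)` otherwise, where `[r]` is the fractional part of `r`. -/
noncomputable def GMI (f r : ℝ) : ℝ :=
  if Int.fract r ≤ f then Int.fract r / f else (1 - Int.fract r) / (1 - f)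

lemma gmi_eq_min (f : ℝ) (hf : f ∈ Set.Ioo (0 : ℝ) 1) (r : ℝ) :
    GMI f r = min (Int.fract r / f) ((1 - Int.fract r) / (1 - f)) := by
  obtain ⟨hf0, hf1⟩ := hf
  have h1f : (0:ℝ) < 1 - f := by linarith
  unfold GMI
  rcases le_or_gt (Int.fract r) f with h | h
  · rw [if_pos h, min_eq_left]
    rw [div_le_div_iff₀ hf0 h1f]
    nlinarith
  · rw [if_neg (not_le.2 h), min_eq_right]
    rw [div_le_div_iff₀ h1f hf0]
    nlinarith

/-- For `f ∈ (0,1)`, `GMI f` is a valid cut generating function for `f`. -/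
theorem stmt1 (f : ℝ) (hf : f ∈ Set.Ioo (0 : ℝ) 1) :
    (∀ r, 0 ≤ GMI f r) ∧ GMI f 0 = 0 ∧ GMI f f = 1 ∧
    (∀ r r', GMI f (r + r') ≤ GMI f r + GMI f r') ∧
    (∀ (r : ℝ) (w : ℤ), GMI f (r + w) = GMI f r) := by
  obtain ⟨hf0, hf1⟩ := hf
  have h1f : (0:ℝ) < 1 - f := by linarith
  refine ⟨?_, ?_, ?_, ?_, ?_⟩
  · intro r
    unfold GMI
    have h0 := Int.fract_nonneg r
    have h1 := Int.fract_lt_one r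
    split
    · positivity
    · exact div_nonneg (by linarith) h1f.le
  · simp [GMI, hf0.le]
  · rw [GMI, Int.fract_eq_self.2 ⟨hf0.le, hf1⟩, if_pos le_rfl, div_self hf0.ne']
  · intro r r'
    rw [gmi_eq_min f ⟨hf0, hf1⟩, gmi_eq_min f ⟨hf0, hf1⟩, gmi_eq_min f ⟨hf0, hf1⟩]
    set a := Int.fract r with hadef
    set b := Int.fract r' with hbdef
    have ha0 : 0 ≤ a := Int.fract_nonneg r
    have ha1 : a < 1 := Int.fract_lt_one r
    have hb0 : 0 ≤ b := Int.fract_nonneg r'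
    have hb1 : b < 1 := Int.fract_lt_one r'
    have hsplit : r + r' = (a + b) + ((⌊r⌋ + ⌊r'⌋ : ℤ) : ℝ) := by
      simp only [hadef, hbdef, Int.fract]
      push_cast
      ring
    have hc : Int.fract (r + r') = Int.fract (a + b) := by
      rw [hsplit, Int.fract_add_intCast]
    rw [hc]
    have key : ∀ x y : ℝ, (x = a / f ∨ x = (1 - a) / (1 - f)) →
        (y = b / f ∨ y = (1 - b) / (1 - f)) →
        min (Int.fract (a + b) / f) ((1 - Int.fract (a + b)) / (1 - f)) ≤ x + y := by
      intro x y hx hy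
      rcases le_or_gt 1 (a + b) with hab | hab
      · have hfr : Int.fract (a + b) = a + b - 1 := by
          have h := Int.fract_add_intCast (a + b - 1) 1
          push_cast at h
          rw [show a + b - 1 + 1 = a + b by ring] at h
          rw [h, Int.fract_eq_self.2 ⟨by linarith, by linarith⟩]
        rw [hfr]
        rcases hx with rfl | rfl <;> rcases hy with rfl | rfl
        · refine le_trans (min_le_left _ _) ?_
          rw [← add_div, div_le_div_iff₀ hf0 hf0]
          nlinarith
        · refine le_trans (min_le_left _ _) ?_
          have h1 : (a + b - 1) / f = a / f + (b - 1) / f := by ring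
          have h2 : (b - 1) / f ≤ 0 := div_nonpos_of_nonpos_of_nonneg (by linarith) hf0.le
          have h3 : 0 ≤ (1 - b) / (1 - f) := div_nonneg (by linarith) h1f.le
          linarith
        · refine le_trans (min_le_left _ _) ?_
          have h1 : (a + b - 1) / f = b / f + (a - 1) / f := by ring
          have h2 : (a - 1) / f ≤ 0 := div_nonpos_of_nonpos_of_nonneg (by linarith) hf0.le
          have h3 : 0 ≤ (1 - a) / (1 - f) := div_nonneg (by linarith) h1f.le
          linarith
        · refine le_trans (min_le_right _ _) ?_
          rw [← add_div, div_le_div_iff₀ h1f h1f]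
          nlinarith
      · have hfr : Int.fract (a + b) = a + b :=
          Int.fract_eq_self.2 ⟨by linarith, hab⟩
        rw [hfr]
        rcases hx with rfl | rfl <;> rcases hy with rfl | rfl
        · refine le_trans (min_le_left _ _) ?_
          rw [← add_div]
        · refine le_trans (min_le_right _ _) ?_
          have h1 : (1 - (a + b)) / (1 - f) ≤ (1 - b) / (1 - f) := by
            rw [div_le_div_iff₀ h1f h1f]; nlinarith
          have h2 : 0 ≤ a / f := div_nonneg ha0 hf0.le
          linarith
        · refine le_trans (min_le_right _ _) ?_
          have h1 : (1 - (a + b)) / (1 - f) ≤ (1 - a) / (1 - f) := by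
            rw [div_le_div_iff₀ h1f h1f]; nlinarith
          have h2 : 0 ≤ b / f := div_nonneg hb0 hf0.le
          linarith
        · refine le_trans (min_le_right _ _) ?_
          have h1 : (1 - (a + b)) / (1 - f) ≤ (1 - a) / (1 - f) := by
            rw [div_le_div_iff₀ h1f h1f]; nlinarith
          have h2 : 0 ≤ (1 - b) / (1 - f) := div_nonneg (by linarith) h1f.le
          linarith
    rcases min_cases (a / f) ((1 - a) / (1 - f)) with ⟨h, _⟩ | ⟨h, _⟩ <;>
      rcases min_cases (b / f) ((1 - b) / (1 - f)) with ⟨h', _⟩ | ⟨h', _⟩ <;>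
      rw [h, h'] <;>
      [exact key _ _ (Or.inl rfl) (Or.inl rfl);
       exact key _ _ (Or.inl rfl) (Or.inr rfl);
       exact key _ _ (Or.inr rfl) (Or.inl rfl);
       exact key _ _ (Or.inr rfl) (Or.inr rfl)]
  · intro r w
    simp [GMI, Int.fract_add_intCast]
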